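/- Inductive step of the Tverberg partition construction (case k ≥ 2): Let A ⊆ R^d be finite and P a set of k points with depth at least (m−1)kd + 1 with respect to A. Then for every j ≤ m there exist pairwise disjoint subsets A_1, ..., A_j ⊆ A, each of cardinality at most kd, such that P ⊆ conv(A_i) for every i. -/

import Mathlib

open Finset

variable {d : ℕ}

/-- Carathéodory with one prescribed (arbitrary) auxiliary point: only `d` points of `A`
are needed besides `y`. -/
lemma carath_aux {A : Set (Fin d → ℝ)} {x : Fin d → ℝ} (y : Fin d → ℝ)
    (hx : x ∈ convexHull ℝ A) :
    ∃ S : Finset (Fin d → ℝ), ↑S ⊆ A ∧ S.card ≤ d ∧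
      x ∈ convexHull ℝ (insert y (S : Set (Fin d → ℝ))) := by
  classical
  rw [convexHull_eq_union] at hx
  simp only [Set.mem_iUnion] at hx
  obtain ⟨T, hTA, hTind, hxT⟩ := hx
  have hTcard : T.card ≤ d + 1 := by
    have := hTind.card_le_finrank_succ
    rw [Fintype.card_coe] at this
    calc T.card ≤ Module.finrank ℝ (vectorSpan ℝ (Set.range ((↑) : T → (Fin d → ℝ)))) + 1 := this
      _ ≤ Module.finrank ℝ (Fin d → ℝ) + 1 := by
          exact Nat.add_le_add_right (Submodule.finrank_le _) 1
      _ = d + 1 := by rw [Module.finrank_fin_fun]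
  by_cases hyT : y ∈ T
  · refine ⟨T.erase y, ?_, ?_, ?_⟩
    · exact (Finset.coe_subset.mpr (Finset.erase_subset _ _)).trans hTA
    · have := Finset.card_erase_of_mem hyT
      omega
    · have : insert y ((T.erase y : Finset _) : Set (Fin d → ℝ)) = ↑T := by
        rw [← Finset.coe_insert, Finset.insert_erase hyT]
      rwa [this]
  by_cases hcard : T.card ≤ d
  · exact ⟨T, hTA, hcard, convexHull_mono (Set.subset_insert _ _) hxT⟩
  have hTd1 : T.card = d + 1 := by omega
  -- barycentric coordinates of y
  have hspan : affineSpan ℝ (Set.range ((↑) : T → (Fin d → ℝ))) = ⊤ := by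
    rw [hTind.affineSpan_eq_top_iff_card_eq_finrank_add_one, Fintype.card_coe,
      Module.finrank_fin_fun, hTd1]
  have hy : y ∈ affineSpan ℝ (Set.range ((↑) : T → (Fin d → ℝ))) := by
    rw [hspan]; trivial
  obtain ⟨w, hw1, hwy⟩ := eq_affineCombination_of_mem_affineSpan_of_fintype hy
  rw [Finset.affineCombination_eq_linear_combination _ _ _ hw1] at hwy
  set μ : (Fin d → ℝ) → ℝ := fun v => if h : v ∈ T then w ⟨v, h⟩ else 0 with hμdef
  have hμ1 : ∑ t ∈ T, μ t = 1 := by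
    rw [← hw1, ← Finset.sum_coe_sort T (fun t => μ t)]
    apply Finset.sum_congr rfl
    intro i _
    simp [hμdef, i.2]
  have hμy : y = ∑ t ∈ T, μ t • t := by
    rw [hwy, ← Finset.sum_coe_sort T (fun t => μ t • t)]
    apply Finset.sum_congr rfl
    intro i _
    simp [hμdef, i.2]
  -- convex coordinates of x
  rw [Finset.convexHull_eq] at hxT
  obtain ⟨l, hl0, hl1, hlx⟩ := hxT
  rw [Finset.centerMass_eq_of_sum_1 _ _ hl1] at hlx
  simp only [id] at hlx
  -- the positive part of μ
  set Tp : Finset (Fin d → ℝ) := T.filter (fun t => 0 < μ t) with hTp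
  have hTpne : Tp.Nonempty := by
    by_contra h
    rw [Finset.not_nonempty_iff_eq_empty] at h
    have : ∑ t ∈ T, μ t ≤ 0 := by
      apply Finset.sum_nonpos
      intro t ht
      by_contra hpos
      push_neg at hpos
      have : t ∈ Tp := by rw [hTp, Finset.mem_filter]; exact ⟨ht, hpos⟩
      rw [h] at this; exact absurd this (Finset.notMem_empty t)
    rw [hμ1] at this; linarith
  obtain ⟨t₀, ht₀Tp, ht₀min⟩ := Finset.exists_min_image Tp (fun t => l t / μ t) hTpne
  have ht₀T : t₀ ∈ T := (Finset.mem_filter.mp ht₀Tp).1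
  have hμt₀ : 0 < μ t₀ := (Finset.mem_filter.mp ht₀Tp).2
  set c : ℝ := l t₀ / μ t₀ with hc
  have hc0 : 0 ≤ c := div_nonneg (hl0 t₀ ht₀T) hμt₀.le
  by_cases hc1 : c ≤ 1
  · -- exchange t₀ for y
    refine ⟨T.erase t₀, (Finset.coe_subset.mpr (Finset.erase_subset _ _)).trans hTA,
      by rw [Finset.card_erase_of_mem ht₀T]; omega, ?_⟩
    set ν : (Fin d → ℝ) → ℝ := fun z => if z = y then c else l z - c * μ z with hν
    have hyE : y ∉ T.erase t₀ := fun h => hyT (Finset.mem_of_mem_erase h)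
    have hνE : ∀ t ∈ T.erase t₀, ν t = l t - c * μ t := by
      intro t ht
      rw [hν]
      simp only
      rw [if_neg]
      intro he; exact hyE (he ▸ ht)
    have hν0 : ∀ z ∈ insert y (T.erase t₀), 0 ≤ ν z := by
      intro z hz
      rcases Finset.mem_insert.mp hz with rfl | hz
      · simp [hν, hc0]
      · rw [hνE z hz]
        rcases le_or_gt (μ z) 0 with hμz | hμz
        · have : 0 ≤ l z := hl0 z (Finset.mem_of_mem_erase hz)
          nlinarith
        · have hzTp : z ∈ Tp := by
            rw [hTp, Finset.mem_filter]
            exact ⟨Finset.mem_of_mem_erase hz, hμz⟩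
          have := (le_div_iff₀ hμz).mp (ht₀min z hzTp)
          linarith
    have ht₀0 : l t₀ - c * μ t₀ = 0 := by
      rw [hc]; field_simp; ring
    have hsumE : ∑ t ∈ T.erase t₀, (l t - c * μ t) = 1 - c := by
      have : ∑ t ∈ T, (l t - c * μ t) = 1 - c := by
        rw [Finset.sum_sub_distrib, hl1, ← Finset.mul_sum, hμ1, mul_one]
      rw [← Finset.add_sum_erase _ _ ht₀T, ht₀0, zero_add] at this
      exact this
    have hν1 : ∑ z ∈ insert y (T.erase t₀), ν z = 1 := by
      rw [Finset.sum_insert hyE]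
      have : ∑ t ∈ T.erase t₀, ν t = ∑ t ∈ T.erase t₀, (l t - c * μ t) :=
        Finset.sum_congr rfl hνE
      rw [this, hsumE]
      have hνy : ν y = c := if_pos rfl
      rw [hνy]; ring
    have hνx : ∑ z ∈ insert y (T.erase t₀), ν z • z = x := by
      rw [Finset.sum_insert hyE]
      have h1 : ∑ t ∈ T.erase t₀, ν t • t = ∑ t ∈ T.erase t₀, (l t - c * μ t) • t := by
        apply Finset.sum_congr rfl
        intro t ht; rw [hνE t ht]
      have h2 : ∑ t ∈ T.erase t₀, (l t - c * μ t) • t = ∑ t ∈ T, (l t - c * μ t) • t := by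
        rw [← Finset.add_sum_erase _ _ ht₀T, ht₀0, zero_smul, zero_add]
      have hνy : ν y = c := if_pos rfl
      rw [h1, h2, hνy]
      have : ∑ t ∈ T, (l t - c * μ t) • t
          = ∑ t ∈ T, l t • t - c • ∑ t ∈ T, μ t • t := by
        rw [Finset.smul_sum, ← Finset.sum_sub_distrib]
        apply Finset.sum_congr rfl
        intro t _
        rw [sub_smul, smul_smul]
      rw [this, ← hμy, hlx]
      abel
    have := (insert y (T.erase t₀)).centerMass_mem_convexHull hν0 (by rw [hν1]; norm_num)
      (fun z hz => Finset.mem_coe.mpr hz)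
    rw [Finset.centerMass_eq_of_sum_1 _ _ hν1] at this
    rw [hνx] at this
    rwa [Finset.coe_insert] at this
  · -- c > 1 is impossible
    exfalso
    push_neg at hc1
    have hlt : ∀ t ∈ Tp, μ t < l t := by
      intro t ht
      have hμt : 0 < μ t := (Finset.mem_filter.mp ht).2
      have := ht₀min t ht
      have hct : 1 < l t / μ t := lt_of_lt_of_le hc1 this
      rw [lt_div_iff₀ hμt] at hct
      linarith
    have h1 : ∑ t ∈ Tp, μ t < ∑ t ∈ Tp, l t :=
      Finset.sum_lt_sum_of_nonempty hTpne hlt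
    have h2 : (1 : ℝ) ≤ ∑ t ∈ Tp, μ t := by
      have : ∑ t ∈ T, μ t ≤ ∑ t ∈ Tp, μ t := by
        rw [← Finset.sum_filter_add_sum_filter_not T (fun t => 0 < μ t)]
        have : ∑ t ∈ T.filter (fun t => ¬ 0 < μ t), μ t ≤ 0 := by
          apply Finset.sum_nonpos
          intro t ht
          have := (Finset.mem_filter.mp ht).2
          push_neg at this
          exact this
        rw [hTp]
        linarith
      rw [hμ1] at this; exact this
    have h3 : ∑ t ∈ Tp, l t ≤ 1 := by
      rw [← hl1]
      apply Finset.sum_le_sum_of_subset_of_nonneg (Finset.filter_subset _ _)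
      intro t ht _
      exact hl0 t ht
    linarith

/-- Quantitative Carathéodory for `k ≥ 2` points: they can be simultaneously captured by the
convex hull of at most `k*d` points of `A`. -/
lemma multi_carath (k : ℕ) (hk : 2 ≤ k) (P : Finset (Fin d → ℝ)) (hP : P.card = k)
    (A : Set (Fin d → ℝ)) (hPA : ↑P ⊆ convexHull ℝ A) :
    ∃ B : Finset (Fin d → ℝ), ↑B ⊆ A ∧ B.card ≤ k * d ∧
      ↑P ⊆ convexHull ℝ (B : Set (Fin d → ℝ)) := by
  classical
  obtain ⟨p₁, hp₁, p₂, hp₂, hne⟩ := Finset.one_lt_card.mp (by omega : 1 < P.card)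
  obtain ⟨S₁, hS₁A, hS₁c, hS₁⟩ := carath_aux p₂ (hPA (Finset.mem_coe.mpr hp₁))
  obtain ⟨S₂, hS₂A, hS₂c, hS₂⟩ := carath_aux p₁ (hPA (Finset.mem_coe.mpr hp₂))
  have hf : ∀ p ∈ P, ∃ S : Finset (Fin d → ℝ), ↑S ⊆ A ∧ S.card ≤ d ∧
      p ∈ convexHull ℝ (insert p₁ (S : Set (Fin d → ℝ))) :=
    fun p hp => carath_aux p₁ (hPA (Finset.mem_coe.mpr hp))
  choose! f hf1 hf2 hf3 using hf
  set Q : Finset (Fin d → ℝ) := (P.erase p₁).erase p₂ with hQ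
  have hQsub : ∀ p ∈ Q, p ∈ P := fun p hp =>
    Finset.mem_of_mem_erase (Finset.mem_of_mem_erase hp)
  set B : Finset (Fin d → ℝ) := (S₁ ∪ S₂) ∪ Q.biUnion f with hB
  have hBA : ↑B ⊆ A := by
    intro x hx
    rw [hB] at hx
    simp only [Finset.coe_union, Set.mem_union, Finset.mem_coe, Finset.mem_biUnion] at hx
    rcases hx with (hx | hx) | hx
    · exact hS₁A hx
    · exact hS₂A hx
    · obtain ⟨q, hq, hxq⟩ := hx
      exact hf1 q (hQsub q hq) hxq
  have hp₂e : p₂ ∈ P.erase p₁ := Finset.mem_erase.mpr ⟨fun h => hne h.symm, hp₂⟩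
  have hQcard : Q.card ≤ k - 2 := by
    rw [hQ, Finset.card_erase_of_mem hp₂e, Finset.card_erase_of_mem hp₁, hP]
    omega
  have hBcard : B.card ≤ k * d := by
    have h1 : B.card ≤ S₁.card + S₂.card + (Q.biUnion f).card := by
      calc B.card ≤ (S₁ ∪ S₂).card + (Q.biUnion f).card := Finset.card_union_le _ _
        _ ≤ S₁.card + S₂.card + (Q.biUnion f).card :=
            Nat.add_le_add_right (Finset.card_union_le _ _) _
    have h2 : (Q.biUnion f).card ≤ (k - 2) * d := by
      calc (Q.biUnion f).card ≤ ∑ q ∈ Q, (f q).card := Finset.card_biUnion_le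
        _ ≤ ∑ _q ∈ Q, d := Finset.sum_le_sum (fun q hq => hf2 q (hQsub q hq))
        _ = Q.card * d := by rw [Finset.sum_const, smul_eq_mul]
        _ ≤ (k - 2) * d := Nat.mul_le_mul_right _ hQcard
    have h3 : d + d + (k - 2) * d = (2 + (k - 2)) * d := by ring
    have h4 : 2 + (k - 2) = k := by omega
    calc B.card ≤ S₁.card + S₂.card + (Q.biUnion f).card := h1
      _ ≤ d + d + (k - 2) * d := by
          have := Nat.add_le_add (Nat.add_le_add hS₁c hS₂c) h2
          exact this
      _ = k * d := by rw [h3, h4]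
  -- the two base points are in the hull of B
  have hS₁B : convexHull ℝ (S₁ : Set (Fin d → ℝ)) ⊆ convexHull ℝ (B : Set (Fin d → ℝ)) := by
    apply convexHull_mono
    rw [hB]; intro x hx
    simp only [Finset.coe_union, Set.mem_union, Finset.mem_coe] at *
    exact Or.inl (Or.inl hx)
  have hS₂B : convexHull ℝ (S₂ : Set (Fin d → ℝ)) ⊆ convexHull ℝ (B : Set (Fin d → ℝ)) := by
    apply convexHull_mono
    rw [hB]; intro x hx
    simp only [Finset.coe_union, Set.mem_union, Finset.mem_coe] at *
    exact Or.inl (Or.inr hx)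
  have hS₁ne : (S₁ : Set (Fin d → ℝ)).Nonempty := by
    rcases S₁.eq_empty_or_nonempty with h | h
    · exfalso
      rw [h] at hS₁
      simp only [Finset.coe_empty, LawfulSingleton.insert_empty_eq, convexHull_singleton,
        Set.mem_singleton_iff] at hS₁
      exact hne hS₁
    · exact Finset.coe_nonempty.mpr h
  have hS₂ne : (S₂ : Set (Fin d → ℝ)).Nonempty := by
    rcases S₂.eq_empty_or_nonempty with h | h
    · exfalso
      rw [h] at hS₂
      simp only [Finset.coe_empty, LawfulSingleton.insert_empty_eq, convexHull_singleton,
        Set.mem_singleton_iff] at hS₂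
      exact hne hS₂.symm
    · exact Finset.coe_nonempty.mpr h
  rw [convexHull_insert hS₁ne, mem_convexJoin] at hS₁
  rw [convexHull_insert hS₂ne, mem_convexJoin] at hS₂
  obtain ⟨x₂, hx₂, q₁, hq₁, hseg₁⟩ := hS₁
  obtain ⟨x₁, hx₁, q₂, hq₂, hseg₂⟩ := hS₂
  rw [Set.mem_singleton_iff] at hx₂ hx₁
  rw [hx₂] at hseg₁
  rw [hx₁] at hseg₂
  obtain ⟨a, b, ha, hb, hab, habp⟩ := hseg₁
  obtain ⟨a', b', ha', hb', hab', habp'⟩ := hseg₂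
  have hq₁B : q₁ ∈ convexHull ℝ (B : Set (Fin d → ℝ)) := hS₁B hq₁
  have hq₂B : q₂ ∈ convexHull ℝ (B : Set (Fin d → ℝ)) := hS₂B hq₂
  have hbpos : 0 < b := by
    rcases lt_or_eq_of_le hb with h | h
    · exact h
    · exfalso
      have : a = 1 := by linarith
      rw [← h, this, one_smul, zero_smul, add_zero] at habp
      exact hne habp.symm
  set s : ℝ := b + a * b' with hs
  have hspos : 0 < s := by rw [hs]; nlinarith
  have key : s • p₁ = (a * b') • q₂ + b • q₁ := by
    have h2 : p₂ = a' • p₁ + b' • q₂ := habp'.symm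
    have h1 : p₁ = a • p₂ + b • q₁ := habp.symm
    rw [h2] at h1
    have hcoef : s = 1 - a * a' := by
      rw [hs]; linear_combination hab + a * hab'
    rw [hcoef, sub_smul, one_smul]
    nth_rewrite 1 [h1]
    rw [smul_add, smul_smul, smul_smul]
    abel
  have hp₁B : p₁ ∈ convexHull ℝ (B : Set (Fin d → ℝ)) := by
    have heq : p₁ = (a * b' / s) • q₂ + (b / s) • q₁ := by
      have := congrArg (fun z => s⁻¹ • z) key
      simp only [smul_smul, inv_mul_cancel₀ (ne_of_gt hspos), one_smul, smul_add] at this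
      rw [this]
      rw [div_eq_inv_mul, div_eq_inv_mul]
    rw [heq]
    exact (convex_convexHull ℝ (B : Set (Fin d → ℝ))) hq₂B hq₁B
      (div_nonneg (by positivity) hspos.le) (div_nonneg hb hspos.le)
      (by rw [← add_div, div_eq_one_iff_eq (ne_of_gt hspos), hs]; ring)
  have hp₂B : p₂ ∈ convexHull ℝ (B : Set (Fin d → ℝ)) := by
    rw [← habp']
    exact (convex_convexHull ℝ (B : Set (Fin d → ℝ))) hp₁B hq₂B ha' hb' hab'
  refine ⟨B, hBA, hBcard, ?_⟩
  intro p hp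
  rw [Finset.mem_coe] at hp
  by_cases h1 : p = p₁
  · rw [h1]; exact hp₁B
  by_cases h2 : p = p₂
  · rw [h2]; exact hp₂B
  have hpQ : p ∈ Q := by
    rw [hQ]
    exact Finset.mem_erase.mpr ⟨h2, Finset.mem_erase.mpr ⟨h1, hp⟩⟩
  have hfpB : (insert p₁ ((f p : Finset (Fin d → ℝ)) : Set (Fin d → ℝ)))
      ⊆ convexHull ℝ (B : Set (Fin d → ℝ)) := by
    intro x hx
    rcases Set.mem_insert_iff.mp hx with rfl | hx
    · exact hp₁B
    · apply subset_convexHull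
      rw [hB]
      simp only [Finset.coe_union, Set.mem_union, Finset.mem_coe, Finset.mem_biUnion]
      exact Or.inr ⟨p, hpQ, hx⟩
  exact convexHull_min hfpB (convex_convexHull ℝ _) (hf3 p hp)

/-- Separation of a point from the convex hull of a finite set by an explicit halfspace. -/
lemma sep_aux (hd : 0 < d) (R : Finset (Fin d → ℝ)) {p : Fin d → ℝ}
    (hp : p ∉ convexHull ℝ (R : Set (Fin d → ℝ))) :
    ∃ (v : Fin d → ℝ) (c : ℝ), v ≠ 0 ∧ (∑ i, v i * p i ≤ c) ∧
      ∀ r ∈ R, ¬ (∑ i, v i * r i ≤ c) := by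
  obtain ⟨f, u, hfp, hfR⟩ := geometric_hahn_banach_point_closed
    (convex_convexHull ℝ _) ((R.finite_toSet).isClosed_convexHull (𝕜 := ℝ)) hp
  set v : Fin d → ℝ := fun i => f (fun j => if i = j then 1 else 0) with hv
  have hfx : ∀ x : Fin d → ℝ, f x = ∑ i, v i * x i := by
    intro x
    have := LinearMap.pi_apply_eq_sum_univ (f : (Fin d → ℝ) →ₗ[ℝ] ℝ) x
    simp only [ContinuousLinearMap.coe_coe] at this
    rw [this]
    apply Finset.sum_congr rfl
    intro i _
    rw [hv, smul_eq_mul, mul_comm]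
  by_cases hv0 : v = 0
  · have hf0 : ∀ x : Fin d → ℝ, f x = 0 := by
      intro x; rw [hfx, hv0]; simp
    have hu : 0 < u := by rw [hf0 p] at hfp; exact hfp
    have hRempty : ∀ r ∈ R, False := by
      intro r hr
      have := hfR r (subset_convexHull ℝ _ (Finset.mem_coe.mpr hr))
      rw [hf0 r] at this
      linarith
    refine ⟨fun _ => 1, ∑ i, p i, ?_, by simp, fun r hr => (hRempty r hr).elim⟩
    intro h
    have := congrFun h ⟨0, hd⟩
    norm_num at this
  · refine ⟨v, u, hv0, ?_, ?_⟩
    · rw [← hfx]; exact hfp.le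
    · intro r hr h
      have := hfR r (subset_convexHull ℝ _ (Finset.mem_coe.mpr hr))
      rw [hfx] at this
      linarith

/-- inductive step of the Tverberg partition construction, case `k ≥ 2`:
if the `k`-point set `P` has depth at least `(m-1)kd + 1` with respect to `A`, then for every
`j ≤ m` there are `j` pairwise disjoint subsets of `A`, each of size at most `kd`, whose
convex hulls all contain `P`. -/
theorem tverberg_inductive_step (d m k : ℕ) (hk : 2 ≤ k)
    (A P : Finset (Fin d → ℝ)) (hPcard : P.card = k)
    (hdepth : ∀ (v : Fin d → ℝ) (c : ℝ), v ≠ 0 → ∀ p ∈ P, (∑ i, v i * p i ≤ c) →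
      (m - 1) * k * d + 1 ≤
        ((A : Set (Fin d → ℝ)) ∩ {x : Fin d → ℝ | ∑ i, v i * x i ≤ c}).ncard) :
    ∀ j ≤ m, ∃ 𝒜 : Fin j → Finset (Fin d → ℝ),
      (∀ i, 𝒜 i ⊆ A) ∧ (∀ i i', i ≠ i' → Disjoint (𝒜 i) (𝒜 i')) ∧
      (∀ i, (𝒜 i).card ≤ k * d) ∧
      ∀ i, ↑P ⊆ convexHull ℝ ((𝒜 i : Set (Fin d → ℝ))) := by
  classical
  rcases Nat.eq_zero_or_pos d with hd | hd
  · subst hd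
    exfalso
    have : P.card ≤ 1 := Finset.card_le_one.mpr (fun a _ b _ => Subsingleton.elim a b)
    omega
  intro j
  induction j with
  | zero =>
      intro _
      exact ⟨fun i => i.elim0, fun i => i.elim0, fun i _ _ => i.elim0,
        fun i => i.elim0, fun i => i.elim0⟩
  | succ n ih =>
      intro hj
      obtain ⟨𝒜, h𝒜A, h𝒜disj, h𝒜card, h𝒜conv⟩ := ih (le_trans (Nat.le_succ n) hj)
      set U : Finset (Fin d → ℝ) := Finset.univ.biUnion 𝒜 with hU
      set R : Finset (Fin d → ℝ) := A \ U with hR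
      have hUcard : U.card ≤ n * (k * d) := by
        calc U.card ≤ ∑ i : Fin n, (𝒜 i).card := Finset.card_biUnion_le
          _ ≤ ∑ _i : Fin n, k * d := Finset.sum_le_sum (fun i _ => h𝒜card i)
          _ = n * (k * d) := by rw [Finset.sum_const, smul_eq_mul, Finset.card_univ,
              Fintype.card_fin]
      have hPR : ↑P ⊆ convexHull ℝ (R : Set (Fin d → ℝ)) := by
        intro p hp
        by_contra hpc
        obtain ⟨v, c, hv, hpvc, hRvc⟩ := sep_aux hd R hpc
        have hb := hdepth v c hv p (Finset.mem_coe.mp hp) hpvc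
        have hsub : (A : Set (Fin d → ℝ)) ∩ {x | ∑ i, v i * x i ≤ c} ⊆ ↑U := by
          rintro a ⟨haA, hac⟩
          by_contra haU
          have haR : a ∈ R := by
            rw [hR, Finset.mem_sdiff]
            exact ⟨Finset.mem_coe.mp haA, fun h => haU (Finset.mem_coe.mpr h)⟩
          exact hRvc a haR hac
        have hle : ((A : Set (Fin d → ℝ)) ∩ {x | ∑ i, v i * x i ≤ c}).ncard ≤ U.card := by
          have := Set.ncard_le_ncard hsub U.finite_toSet
          rwa [Set.ncard_coe_finset] at this
        have hnm : n ≤ m - 1 := Nat.le_sub_one_of_lt hj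
        have h1 : n * (k * d) ≤ (m - 1) * (k * d) := Nat.mul_le_mul_right (k * d) hnm
        have h2 : ((A : Set (Fin d → ℝ)) ∩ {x | ∑ i, v i * x i ≤ c}).ncard
            ≤ (m - 1) * k * d := by
          rw [Nat.mul_assoc]
          exact le_trans hle (le_trans hUcard h1)
        exact Nat.not_succ_le_self _ (le_trans hb h2)
      obtain ⟨B, hBR, hBcard, hPB⟩ := multi_carath k hk P hPcard _ hPR
      have hBR' : B ⊆ R := Finset.coe_subset.mp hBR
      have hBU : Disjoint B U := by
        rw [Finset.disjoint_left]
        intro a haB haU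
        exact (Finset.mem_sdiff.mp (hBR' haB)).2 haU
      refine ⟨Fin.cons B 𝒜, ?_, ?_, ?_, ?_⟩
      · intro i
        induction i using Fin.cases with
        | zero => rw [Fin.cons_zero]; exact hBR'.trans (Finset.sdiff_subset)
        | succ i => rw [Fin.cons_succ]; exact h𝒜A i
      · intro i i'
        refine Fin.cases ?_ (fun a => ?_) i
        · refine Fin.cases ?_ (fun b => ?_) i'
          · intro h; exact absurd rfl h
          · intro _
            rw [Fin.cons_zero, Fin.cons_succ]
            exact hBU.mono_right (Finset.subset_biUnion_of_mem 𝒜 (Finset.mem_univ b))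
        · refine Fin.cases ?_ (fun b => ?_) i'
          · intro _
            rw [Fin.cons_succ, Fin.cons_zero]
            exact (hBU.mono_right (Finset.subset_biUnion_of_mem 𝒜 (Finset.mem_univ a))).symm
          · intro h
            rw [Fin.cons_succ, Fin.cons_succ]
            exact h𝒜disj a b (fun hab => h (by rw [hab]))
      · intro i
        induction i using Fin.cases with
        | zero => rw [Fin.cons_zero]; exact hBcard
        | succ i => rw [Fin.cons_succ]; exact h𝒜card i
      · intro i
        induction i using Fin.cases with
        | zero => rw [Fin.cons_zero]; exact hPB
        | succ i => rw [Fin.cons_succ]; exact h𝒜conv i
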